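/- Let H⁺ and H⁰ be complex Hilbert spaces and ι : H⁺ → H⁰ a compact injective continuous linear map. Suppose K : H⁺ → H⁺ is a continuous linear map satisfying ⟨K u, v⟩₊ = ⟨ι u, ι v⟩₀ for all u, v ∈ H⁺. Then there exists a Hilbert (orthonormal) basis of H⁺ consisting of eigenvectors of K, and all the corresponding eigenvalues are positive real numbers. -/

import Mathlib

set_option maxHeartbeats 1000000
set_option synthInstance.maxHeartbeats 400000

open scoped ComplexInnerProductSpace

lemma key_cs {E : Type*} [NormedAddCommGroup E] [InnerProductSpace ℂ E]
    (T : E →L[ℂ] E) (hsym : ∀ x y : E, ⟪T x, y⟫ = ⟪x, T y⟫)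
    (hpos : ∀ x : E, 0 ≤ Complex.re ⟪T x, x⟫) (x : E) :
    ‖T x‖ ^ 2 * ‖T x‖ ^ 2 ≤ Complex.re ⟪T x, x⟫ * Complex.re ⟪T (T x), T x⟫ := by
  set y := T x with hy
  have expand : ∀ t : ℝ, 0 ≤ (Complex.re ⟪T y, y⟫) * (t * t) +
      (2 * Complex.re ⟪T x, y⟫) * t + Complex.re ⟪T x, x⟫ := by
    intro t
    have h0 := hpos (x + (t : ℂ) • y)
    have hexp : ⟪T (x + (t:ℂ) • y), x + (t:ℂ) • y⟫ =
        ⟪T x, x⟫ + (t:ℂ) * ⟪T x, y⟫ + (t:ℂ) * ⟪T y, x⟫ + (t:ℂ) * (t:ℂ) * ⟪T y, y⟫ := by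
      simp only [map_add, map_smul, inner_add_left, inner_add_right, inner_smul_left,
        inner_smul_right, Complex.conj_ofReal]
      ring
    rw [hexp] at h0
    have hyx : Complex.re ⟪T y, x⟫ = Complex.re ⟪T x, y⟫ := by
      rw [hsym x y]
      simpa using inner_re_symm (𝕜 := ℂ) (T y) x
    simp only [Complex.add_re, Complex.mul_re, Complex.mul_im, Complex.ofReal_re,
      Complex.ofReal_im] at h0
    rw [hyx] at h0
    nlinarith [h0]
  have hd := discrim_le_zero expand
  rw [discrim] at hd
  have hre : Complex.re ⟪T x, y⟫ = ‖T x‖ ^ 2 := by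
    rw [hy]
    simpa using inner_self_eq_norm_sq (𝕜 := ℂ) (T x)
  nlinarith [hd, hre]

lemma exists_eigen {E : Type*} [NormedAddCommGroup E] [InnerProductSpace ℂ E]
    [CompleteSpace E] [Nontrivial E]
    (T : E →L[ℂ] E) (hcomp : IsCompactOperator T)
    (hsym : ∀ x y : E, ⟪T x, y⟫ = ⟪x, T y⟫)
    (hpos : ∀ x : E, x ≠ 0 → 0 < Complex.re ⟪T x, x⟫) :
    ∃ (x : E) (μ : ℝ), ‖x‖ = 1 ∧ 0 < μ ∧ T x = (μ : ℂ) • x := by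
  set r : E → ℝ := fun x => Complex.re ⟪T x, x⟫ with hr
  have hpos' : ∀ x : E, 0 ≤ r x := by
    intro x
    rcases eq_or_ne x 0 with h | h
    · simp [hr, h]
    · exact (hpos x h).le
  have hscale : ∀ (c : ℝ) (x : E), r (((c:ℝ) : ℂ) • x) = c ^ 2 * r x := by
    intro c x
    simp only [hr, map_smul, inner_smul_left, inner_smul_right, Complex.conj_ofReal,
      ← mul_assoc, ← Complex.ofReal_mul]
    simp only [Complex.mul_re, Complex.ofReal_re, Complex.ofReal_im]
    ring
  set s : Set ℝ := r '' Metric.sphere 0 1 with hs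
  obtain ⟨x₀, hx₀⟩ := exists_ne (0 : E)
  set u₀ : E := ((‖x₀‖⁻¹ : ℝ) : ℂ) • x₀ with hu₀
  have hu₀norm : ‖u₀‖ = 1 := by
    have : ‖x₀‖ ≠ 0 := norm_ne_zero_iff.mpr hx₀
    simp [hu₀, norm_smul, this]
  have hsne : s.Nonempty := ⟨r u₀, ⟨u₀, by simpa using hu₀norm, rfl⟩⟩
  have hsbdd : BddAbove s := by
    refine ⟨‖T‖, ?_⟩
    rintro - ⟨x, hx, rfl⟩
    have hx1 : ‖x‖ = 1 := by simpa using hx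
    calc r x ≤ ‖⟪T x, x⟫‖ := by
          simpa using Complex.re_le_norm ⟪T x, x⟫
      _ ≤ ‖T x‖ * ‖x‖ := norm_inner_le_norm _ _
      _ ≤ ‖T‖ * ‖x‖ * ‖x‖ := by
          have := T.le_opNorm x
          nlinarith [norm_nonneg x, norm_nonneg (T x)]
      _ = ‖T‖ := by rw [hx1]; ring
  set lam : ℝ := sSup s with hlam
  have hlampos : 0 < lam := by
    have h1 : r u₀ ≤ lam := le_csSup hsbdd ⟨u₀, by simpa using hu₀norm, rfl⟩
    have h2 : 0 < r u₀ := hpos u₀ (by intro h; rw [h] at hu₀norm; simp at hu₀norm)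
    linarith
  have hrle : ∀ y : E, r y ≤ lam * ‖y‖ ^ 2 := by
    intro y
    rcases eq_or_ne y 0 with h | h
    · simp [hr, h]
    · have hy : ‖y‖ ≠ 0 := norm_ne_zero_iff.mpr h
      have hunit : ‖((‖y‖⁻¹ : ℝ) : ℂ) • y‖ = 1 := by
        simp [norm_smul, abs_of_nonneg (inv_nonneg.mpr (norm_nonneg y)), hy]
      have hmem : r (((‖y‖⁻¹ : ℝ) : ℂ) • y) ≤ lam :=
        le_csSup hsbdd ⟨_, by simpa using hunit, rfl⟩
      rw [hscale] at hmem
      have h3 : (0:ℝ) < ‖y‖ ^ 2 := by positivity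
      have h4 : (‖y‖⁻¹) ^ 2 = (‖y‖ ^ 2)⁻¹ := by
        rw [inv_pow]
      rw [h4] at hmem
      calc r y = ‖y‖ ^ 2 * ((‖y‖ ^ 2)⁻¹ * r y) := by
            field_simp
        _ ≤ ‖y‖ ^ 2 * lam := by nlinarith [hmem, h3]
        _ = lam * ‖y‖ ^ 2 := by ring
  have hkey : ∀ x : E, ‖x‖ = 1 → ‖T x‖ ^ 2 ≤ lam * r x := by
    intro x hx
    have hcs := key_cs T hsym (fun z => hpos' z) x
    have h1 : Complex.re ⟪T (T x), T x⟫ ≤ lam * ‖T x‖ ^ 2 := hrle (T x)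
    rcases eq_or_ne (T x) 0 with h | h
    · rw [h]
      simpa using mul_nonneg hlampos.le (hpos' x)
    · have hTx : (0:ℝ) < ‖T x‖ ^ 2 := by
        have := norm_pos_iff.mpr h
        positivity
      nlinarith [hcs, h1, hpos' x, hTx]
  obtain ⟨f, hmono, hf, hfs⟩ := exists_seq_tendsto_sSup hsne hsbdd
  choose xx hxx hxxr using fun n => (hfs n : f n ∈ s)
  have hxnorm : ∀ n, ‖xx n‖ = 1 := fun n => by simpa using hxx n
  have hrtend : Filter.Tendsto (fun n => r (xx n)) Filter.atTop (nhds lam) := by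
    simpa [hxxr] using hf
  have hdiff : Filter.Tendsto (fun n => T (xx n) - ((lam:ℝ):ℂ) • xx n)
      Filter.atTop (nhds 0) := by
    rw [tendsto_zero_iff_norm_tendsto_zero]
    have hsq : ∀ n, ‖T (xx n) - ((lam:ℝ):ℂ) • xx n‖ ^ 2 ≤ lam * (lam - r (xx n)) := by
      intro n
      have hin : Complex.re ⟪T (xx n), ((lam:ℝ):ℂ) • xx n⟫ = lam * r (xx n) := by
        rw [inner_smul_right]
        simp [hr, Complex.mul_re]
      have hnorm2 : ‖((lam:ℝ):ℂ) • xx n‖ ^ 2 = lam ^ 2 := by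
        rw [norm_smul, hxnorm n]
        simp [abs_of_pos hlampos]
      have hkey' := hkey (xx n) (hxnorm n)
      calc ‖T (xx n) - ((lam:ℝ):ℂ) • xx n‖ ^ 2
          = ‖T (xx n)‖ ^ 2 - 2 * Complex.re ⟪T (xx n), ((lam:ℝ):ℂ) • xx n⟫ +
            ‖((lam:ℝ):ℂ) • xx n‖ ^ 2 := by
            exact @norm_sub_sq ℂ _ _ _ _ (T (xx n)) (((lam:ℝ):ℂ) • xx n)
        _ = ‖T (xx n)‖ ^ 2 - 2 * (lam * r (xx n)) + lam ^ 2 := by rw [hin, hnorm2]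
        _ ≤ lam * (lam - r (xx n)) := by nlinarith [hkey']
    have htend0 : Filter.Tendsto (fun n => lam * (lam - r (xx n))) Filter.atTop (nhds 0) := by
      have : Filter.Tendsto (fun n => lam - r (xx n)) Filter.atTop (nhds 0) := by
        simpa using (tendsto_const_nhds (x := lam)).sub hrtend
      simpa using this.const_mul lam
    have hsqt : Filter.Tendsto (fun n => ‖T (xx n) - ((lam:ℝ):ℂ) • xx n‖ ^ 2)
        Filter.atTop (nhds 0) :=
      squeeze_zero (fun n => by positivity) hsq htend0
    have := hsqt.sqrt
    simpa [Real.sqrt_sq (norm_nonneg _)] using this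
  obtain ⟨C, hC, hCsub⟩ := hcomp.image_closedBall_subset_compact 1
  have hmem : ∀ n, T (xx n) ∈ C := by
    intro n
    apply hCsub
    exact ⟨xx n, by simp [Metric.mem_closedBall, hxnorm n], rfl⟩
  obtain ⟨y, hyC, φ, hφ, hφt⟩ := hC.tendsto_subseq hmem
  have hxt : Filter.Tendsto (fun n => (((lam:ℝ):ℂ) • xx (φ n) : E)) Filter.atTop (nhds y) := by
    have h1 : Filter.Tendsto (fun n => T (xx (φ n)) - ((lam:ℝ):ℂ) • xx (φ n))
        Filter.atTop (nhds 0) := hdiff.comp hφ.tendsto_atTop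
    have := hφt.sub h1
    simpa using this
  have hlamC : ((lam:ℝ):ℂ) ≠ 0 := Complex.ofReal_ne_zero.mpr hlampos.ne'
  set x : E := (((lam:ℝ):ℂ))⁻¹ • y with hx
  have hxxt : Filter.Tendsto (fun n => xx (φ n)) Filter.atTop (nhds x) := by
    have := hxt.const_smul ((((lam:ℝ):ℂ))⁻¹)
    simpa only [hx, smul_smul, inv_mul_cancel₀ hlamC, one_smul] using this
  have hxnorm1 : ‖x‖ = 1 := by
    have h2 : Filter.Tendsto (fun n => ‖xx (φ n)‖) Filter.atTop (nhds ‖x‖) :=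
      (continuous_norm.tendsto x).comp hxxt
    have h3 : Filter.Tendsto (fun n => ‖xx (φ n)‖) Filter.atTop (nhds 1) := by
      simpa [hxnorm] using tendsto_const_nhds (x := (1:ℝ))
    exact tendsto_nhds_unique h2 h3
  have hTx : T x = y := by
    have h1 : Filter.Tendsto (fun n => T (xx (φ n))) Filter.atTop (nhds (T x)) :=
      (T.continuous.tendsto x).comp hxxt
    exact tendsto_nhds_unique h1 hφt
  refine ⟨x, lam, hxnorm1, hlampos, ?_⟩
  rw [hTx, hx, smul_smul, mul_inv_cancel₀ hlamC, one_smul]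

open Submodule in
theorem stmt5 {Hp H0 : Type*} [NormedAddCommGroup Hp] [InnerProductSpace ℂ Hp] [CompleteSpace Hp]
    [NormedAddCommGroup H0] [InnerProductSpace ℂ H0] [CompleteSpace H0]
    (ι : Hp →L[ℂ] H0) (hinj : Function.Injective ι) (hcomp : IsCompactOperator ι)
    (K : Hp →L[ℂ] Hp) (hK : ∀ u v : Hp, ⟪K u, v⟫ = ⟪ι u, ι v⟫) :
    ∃ (I : Type) (b : HilbertBasis I ℂ Hp) (μ : I → ℝ),
      (∀ i, 0 < μ i) ∧ ∀ i, K (b i) = (μ i : ℂ) • b i := by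
  classical
  -- basic properties of K
  have hKadj : ∀ u, K u = (ContinuousLinearMap.adjoint ι) (ι u) := by
    intro u
    apply ext_inner_right ℂ
    intro v
    rw [hK, ContinuousLinearMap.adjoint_inner_left]
  have hKcomp : IsCompactOperator K := by
    have h1 : IsCompactOperator (⇑(ContinuousLinearMap.adjoint ι) ∘ ⇑ι) :=
      hcomp.continuous_comp (ContinuousLinearMap.adjoint ι).continuous
    have h2 : ⇑K = ⇑(ContinuousLinearMap.adjoint ι) ∘ ⇑ι := by
      funext u; exact hKadj u
    unfold IsCompactOperator
    rw [h2]
    exact h1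
  have hsymK : ∀ u v : Hp, ⟪K u, v⟫ = ⟪u, K v⟫ := by
    intro u v
    rw [hK, ← inner_conj_symm u (K v), hK, inner_conj_symm]
  have hposK : ∀ u : Hp, u ≠ 0 → 0 < Complex.re ⟪K u, u⟫ := by
    intro u hu
    rw [hK]
    have h1 : ι u ≠ 0 := by
      intro h
      exact hu (hinj (by rw [h, map_zero]))
    have h2 : Complex.re ⟪ι u, ι u⟫ = ‖ι u‖ ^ 2 := by
      simpa using inner_self_eq_norm_sq (𝕜 := ℂ) (ι u)
    rw [h2]
    have := norm_pos_iff.mpr h1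
    positivity
  -- set of eigenvectors with positive eigenvalue
  set S : Set Hp := {z | ∃ μ : ℝ, 0 < μ ∧ K z = (μ : ℂ) • z} with hS
  -- Zorn's lemma: maximal orthonormal set of eigenvectors
  obtain ⟨w, hwmax⟩ := zorn_subset
      {w : Set Hp | w ⊆ S ∧ Orthonormal ℂ ((↑) : w → Hp)} (by
    intro c hc hchain
    refine ⟨⋃₀ c, ⟨?_, ?_⟩, fun s hs => Set.subset_sUnion_of_mem hs⟩
    · intro z hz
      obtain ⟨t, htc, hzt⟩ := hz
      exact (hc htc).1 hzt
    · exact orthonormal_sUnion_of_directed hchain.directedOn fun a ha => (hc ha).2)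
  obtain ⟨hwS, hwon⟩ := hwmax.prop
  -- span of w is K-invariant
  have hmapspan : ∀ z ∈ span ℂ w, K z ∈ span ℂ w := by
    have h1 : (span ℂ w).map (K : Hp →ₗ[ℂ] Hp) ≤ span ℂ w := by
      rw [Submodule.map_span, Submodule.span_le]
      rintro - ⟨z, hz, rfl⟩
      obtain ⟨μ, hμ, he⟩ := hwS hz
      show K z ∈ span ℂ w
      rw [he]
      exact Submodule.smul_mem _ _ (Submodule.subset_span hz)
    exact fun z hz => h1 ⟨z, hz, rfl⟩
  -- the orthogonal complement of the span is trivial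
  have hbot : (span ℂ w)ᗮ = ⊥ := by
    by_contra hne
    set F : Submodule ℂ Hp := (span ℂ w)ᗮ with hF
    haveI : Nontrivial F := Submodule.nontrivial_iff_ne_bot.mpr hne
    haveI : HasOrthogonalProjection F := by rw [hF]; infer_instance
    -- F is K-invariant
    have hinv : ∀ u : Hp, u ∈ F → K u ∈ F := by
      intro u hu
      rw [hF, Submodule.mem_orthogonal]
      intro z hz
      rw [← hsymK z u]
      exact (Submodule.mem_orthogonal _ _).1 hu (K z) (hmapspan z hz)
    -- restriction of K to F
    set T : F →L[ℂ] F := (orthogonalProjection F).comp (K.comp F.subtypeL) with hT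
    have hTcoe : ∀ a : F, ((T a : F) : Hp) = K ↑a := by
      intro a
      show ((orthogonalProjection F (K ↑a) : F) : Hp) = K ↑a
      exact Submodule.starProjection_eq_self_iff.mpr (hinv ↑a a.2)
    have hTcomp : IsCompactOperator T := by
      have h1 : IsCompactOperator (⇑K ∘ ⇑F.subtypeL) := hKcomp.comp_clm F.subtypeL
      have h2 : IsCompactOperator (⇑(orthogonalProjection F) ∘ (⇑K ∘ ⇑F.subtypeL)) :=
        h1.continuous_comp (orthogonalProjection F).continuous
      exact h2
    have hTsym : ∀ a b : F, ⟪T a, b⟫ = ⟪a, T b⟫ := by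
      intro a b
      rw [Submodule.coe_inner, Submodule.coe_inner, hTcoe a, hTcoe b]
      exact hsymK ↑a ↑b
    have hTpos : ∀ a : F, a ≠ 0 → 0 < Complex.re ⟪T a, a⟫ := by
      intro a ha
      rw [Submodule.coe_inner, hTcoe a]
      exact hposK ↑a (by simpa using ha)
    obtain ⟨v, μ, hv1, hμ, hTv⟩ := exists_eigen T hTcomp hTsym hTpos
    -- v is an eigenvector of K
    have hKv : K ↑v = (μ : ℂ) • (v : Hp) := by
      have h1 : ((T v : F) : Hp) = K ↑v := hTcoe v
      rw [hTv] at h1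
      rw [← h1]
      simp
    have hvS : (v : Hp) ∈ S := ⟨μ, hμ, hKv⟩
    have hvF : (v : Hp) ∈ F := v.2
    have hvnw : (v : Hp) ∉ w := by
      intro hvw
      have h1 : (v : Hp) ∈ span ℂ w := Submodule.subset_span hvw
      have h2 : (v : Hp) = 0 := by
        have : (v : Hp) ∈ span ℂ w ⊓ (span ℂ w)ᗮ := ⟨h1, hvF⟩
        simpa [(span ℂ w).inf_orthogonal_eq_bot] using this
      rw [show v = (0 : F) from Subtype.ext h2] at hv1
      simp at hv1
    have hvorth : ∀ z ∈ w, ⟪z, (v : Hp)⟫ = 0 := by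
      intro z hz
      exact (Submodule.mem_orthogonal _ _).1 hvF z (Submodule.subset_span hz)
    -- insert v into w : still orthonormal, contradiction with maximality
    have hw' : insert (v : Hp) w ⊆ S ∧ Orthonormal ℂ ((↑) : ↥(insert (v : Hp) w) → Hp) := by
      constructor
      · exact Set.insert_subset hvS hwS
      · constructor
        · rintro ⟨a, ha'⟩
          rcases Set.eq_or_mem_of_mem_insert ha' with ha | ha
          · simp only [ha]
            exact hv1
          · exact hwon.1 ⟨a, ha⟩
        · rintro ⟨a, ha'⟩ ⟨b, hb'⟩ hab'
          rcases Set.eq_or_mem_of_mem_insert ha' with ha | ha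
          · have hb : b ∈ w := by
              refine Set.mem_of_mem_insert_of_ne hb' ?_
              intro hbe'
              exact hab' (by simp [ha, hbe'])
            rw [inner_eq_zero_symm]
            simp only [ha]
            exact hvorth b hb
          · rcases Set.eq_or_mem_of_mem_insert hb' with hb | hb
            · simp only [hb]
              exact hvorth a ha
            · have : (⟨a, ha⟩ : w) ≠ ⟨b, hb⟩ := by
                intro h
                exact hab' (Subtype.ext (by simpa using congrArg Subtype.val h))
              exact hwon.2 this
    have h3 : insert (v : Hp) w ⊆ w := hwmax.2 hw' (Set.subset_insert _ _)
    exact hvnw (h3 (Set.mem_insert _ _))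
  -- eigenvalue function on w
  choose μf hμf1 hμf2 using fun (z : w) => hwS z.2
  -- countability of w
  obtain ⟨C, hCcomp, hCsub⟩ := hKcomp.image_closedBall_subset_compact 1
  have hwunit : ∀ z : w, ‖(z : Hp)‖ = 1 := fun z => hwon.1 z
  set wn : ℕ → Set Hp := fun n => {z | ∃ hz : z ∈ w, ((n : ℝ) + 1)⁻¹ ≤ μf ⟨z, hz⟩} with hwn
  have hwsub : w ⊆ ⋃ n, wn n := by
    intro z hz
    obtain ⟨n, hn⟩ := exists_nat_ge (μf ⟨z, hz⟩)⁻¹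
    refine Set.mem_iUnion.mpr ⟨n, hz, ?_⟩
    have hμ := hμf1 ⟨z, hz⟩
    have hn1 : (0:ℝ) < (n:ℝ) + 1 := by positivity
    have h2 : 1 ≤ μf ⟨z, hz⟩ * ((n:ℝ) + 1) := by
      have h3 : (μf ⟨z, hz⟩)⁻¹ * μf ⟨z, hz⟩ ≤ (n:ℝ) * μf ⟨z, hz⟩ :=
        mul_le_mul_of_nonneg_right hn hμ.le
      rw [inv_mul_cancel₀ hμ.ne'] at h3
      nlinarith
    calc ((n:ℝ) + 1)⁻¹ = ((n:ℝ)+1)⁻¹ * 1 := by ring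
      _ ≤ ((n:ℝ)+1)⁻¹ * (μf ⟨z, hz⟩ * ((n:ℝ)+1)) := by
          have := inv_nonneg.mpr hn1.le
          nlinarith
      _ = μf ⟨z, hz⟩ := by field_simp
  have hfin : ∀ n, (wn n).Finite := by
    intro n
    by_contra hinf
    set δ : ℝ := Real.sqrt 2 * ((n:ℝ) + 1)⁻¹ with hδ
    have hn1 : (0:ℝ) < (n:ℝ) + 1 := by positivity
    have hδpos : 0 < δ := by
      have := Real.sqrt_pos.mpr (by norm_num : (0:ℝ) < 2)
      positivity
    -- separation of images
    have hsep : ∀ z ∈ wn n, ∀ z' ∈ wn n, z ≠ z' → δ ≤ dist (K z) (K z') := by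
      rintro z ⟨hz, hzn⟩ z' ⟨hz', hzn'⟩ hne
      have hip : ⟪z, z'⟫ = 0 := hwon.2 (i := ⟨z, hz⟩) (j := ⟨z', hz'⟩)
        (fun h => hne (by simpa using congrArg Subtype.val h))
      have hKz := hμf2 ⟨z, hz⟩
      have hKz' := hμf2 ⟨z', hz'⟩
      set a := μf ⟨z, hz⟩
      set b := μf ⟨z', hz'⟩
      have hdist : dist (K z) (K z') ^ 2 = a ^ 2 + b ^ 2 := by
        rw [dist_eq_norm, hKz, hKz']
        have hexp := @norm_sub_sq ℂ _ _ _ _ ((a:ℂ) • (z:Hp)) ((b:ℂ) • (z':Hp))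
        have hinner : ⟪((a:ℂ) • (z:Hp)), ((b:ℂ) • (z':Hp))⟫ = 0 := by
          rw [inner_smul_left, inner_smul_right, hip]
          ring
        rw [hexp, hinner]
        have h1 : ‖(a:ℂ) • (z:Hp)‖ = |a| := by
          rw [norm_smul, hwunit ⟨z, hz⟩]
          simp
        have h2 : ‖(b:ℂ) • (z':Hp)‖ = |b| := by
          rw [norm_smul, hwunit ⟨z', hz'⟩]
          simp
        rw [h1, h2]
        simp [sq_abs]
      have hδ2 : δ ^ 2 = 2 * (((n:ℝ) + 1)⁻¹) ^ 2 := by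
        rw [hδ, mul_pow, Real.sq_sqrt (by norm_num : (0:ℝ) ≤ 2)]
      have hapos : ((n:ℝ)+1)⁻¹ ≤ a := hzn
      have hbpos : ((n:ℝ)+1)⁻¹ ≤ b := hzn'
      have hinvpos : 0 < ((n:ℝ)+1)⁻¹ := by positivity
      have hsq : δ ^ 2 ≤ dist (K z) (K z') ^ 2 := by
        rw [hdist, hδ2]
        nlinarith
      nlinarith [dist_nonneg (x := K z) (y := K z'), hδpos, hsq]
    -- K maps wn n into C, injectively
    have hKinj : ∀ z ∈ wn n, ∀ z' ∈ wn n, K z = K z' → z = z' := by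
      intro z hz z' hz' h
      by_contra hne
      have := hsep z hz z' hz' hne
      rw [h, dist_self] at this
      linarith
    have hKC : ∀ z ∈ wn n, K z ∈ C := by
      rintro z ⟨hz, _⟩
      exact hCsub ⟨z, by simp [Metric.mem_closedBall, hwunit ⟨z, hz⟩], rfl⟩
    -- total boundedness gives a contradiction
    obtain ⟨t, htfin, htsub⟩ := (Metric.totallyBounded_iff.mp hCcomp.totallyBounded)
      (δ/2) (by linarith)
    have hchoice : ∀ z : wn n, ∃ y ∈ t, K ↑z ∈ Metric.ball y (δ/2) := by
      intro z
      have := htsub (hKC ↑z z.2)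
      simpa using this
    choose g hg1 hg2 using hchoice
    have hginj : Function.Injective g := by
      intro z z' h
      have hd : dist (K ↑z) (K ↑z') < δ := by
        have d1 := hg2 z
        have d2 := hg2 z'
        rw [Metric.mem_ball] at d1 d2
        calc dist (K ↑z) (K ↑z') ≤ dist (K ↑z) (g z') + dist (g z') (K ↑z') := by
              exact dist_triangle _ _ _
          _ < δ/2 + δ/2 := by
              rw [← h] at *
              rw [dist_comm (g z)]
              exact add_lt_add d1 d2
          _ = δ := by ring
      have : (↑z : Hp) = ↑z' := by
        by_contra hne
        have := hsep ↑z z.2 ↑z' z'.2 hne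
        linarith
      exact Subtype.ext this
    have : Finite (wn n) := by
      have : Finite t := htfin.to_subtype
      exact Finite.of_injective (fun z => (⟨g z, hg1 z⟩ : t)) (by
        intro a b h
        exact hginj (by simpa using congrArg Subtype.val h))
    exact hinf (Set.toFinite _)
  have hcount : w.Countable := (Set.countable_iUnion fun n => (hfin n).countable).mono hwsub
  -- build the Hilbert basis over an index type in Type 0
  obtain ⟨fℕ, hfℕ⟩ := Set.countable_iff_exists_injective.mp hcount
  set e : w ≃ Set.range fℕ := Equiv.ofInjective fℕ hfℕ with he
  set v : Set.range fℕ → Hp := fun i => ↑(e.symm i) with hv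
  have hvon : Orthonormal ℂ v := hwon.comp e.symm e.symm.injective
  have hvrange : Set.range v = w := by
    rw [hv]
    have h1 : (fun i => (↑(e.symm i) : Hp)) = Subtype.val ∘ e.symm := rfl
    rw [h1, Set.range_comp, Equiv.range_eq_univ, Set.image_univ, Subtype.range_coe]
  have hsp : (span ℂ (Set.range v))ᗮ = ⊥ := by rw [hvrange]; exact hbot
  refine ⟨Set.range fℕ, HilbertBasis.mkOfOrthogonalEqBot hvon hsp,
    fun i => μf (e.symm i), fun i => hμf1 _, fun i => ?_⟩
  rw [HilbertBasis.coe_mkOfOrthogonalEqBot]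
  exact hμf2 (e.symm i)
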